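/- Let $k \geq 2\lambda + 1$ and $s = \lfloor (k-1)/\lambda \rfloor$ (so $s \geq 2$). Let $(V,\mathcal{B})$ be a cyclic $(v,k,\lambda)$-design with orbits $\mathcal{B}_1,\ldots,\mathcal{B}_t$ and let $\mathcal{P}'$ be a partial parallel class containing at most $s$ blocks from each orbit. If for each orbit index $i$ with $|\mathcal{P}' \cap \mathcal{B}_i| \leq s-2$ the orbit $\mathcal{B}_i$ contains more than $k^2(ks - k + 1)(d(\mathcal{P}') - 1)$ $\mathcal{P}'$-good blocks, then there is a partial parallel class $\mathcal{P}''$ of $(V,\mathcal{B})$ such that the number of orbits meeting $\mathcal{P}''$ in exactly $s-1$ blocks is at most $(k+1)d(\mathcal{P}') + \tau_{s-1}(\mathcal{P}')$ and every other orbit meets $\mathcal{P}''$ in exactly $s$ blocks. -/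

import Mathlib

open Finset

/-- The orbit (as a finset of indices) of a block index under the translation
action of `ZMod v`. -/
def orbF (v : ℕ) [NeZero v] {ι : Type} [DecidableEq ι] [AddAction (ZMod v) ι] (b : ι) :
    Finset ι :=
  Finset.univ.image (fun t : ZMod v => t +ᵥ b)

/-- The set of block orbits of the design, as finsets of indices. -/
def Orbs (v : ℕ) [NeZero v] (ι : Type) [Fintype ι] [DecidableEq ι]
    [AddAction (ZMod v) ι] : Finset (Finset ι) :=
  Finset.univ.image (orbF v (ι := ι))

/-- `P` is a partial parallel class: its blocks are pairwise disjoint. -/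
def isPPC {v : ℕ} {ι : Type} (ℬ : ι → Finset (ZMod v)) (P : Finset ι) : Prop :=
  ∀ b ∈ P, ∀ c ∈ P, b ≠ c → Disjoint (ℬ b) (ℬ c)

/-- `τ_a(P)`: the number of orbits meeting `P` in exactly `a` blocks. -/
def tauP (v : ℕ) [NeZero v] (ι : Type) [Fintype ι] [DecidableEq ι]
    [AddAction (ZMod v) ι] (P : Finset ι) (a : ℕ) : ℕ :=
  ((Orbs v ι).filter (fun O => (P ∩ O).card = a)).card

/-- `d(P) = ∑_{a=0}^{s-2} (s-1-a) τ_a(P)`: how far `P` is from meeting every orbit in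
at least `s-1` blocks. -/
def dPar (v : ℕ) [NeZero v] (ι : Type) [Fintype ι] [DecidableEq ι]
    [AddAction (ZMod v) ι] (s : ℕ) (P : Finset ι) : ℕ :=
  ∑ a ∈ Finset.range (s - 1), (s - 1 - a) * tauP v ι P a

/-- A block `b` is `P`-good if it intersects at most one block of `P ∩ 𝒪` for every
orbit `𝒪`, and intersects no block of `P ∩ 𝒪` for every orbit `𝒪` meeting `P` in at
most `s-1` blocks. -/
def isGood (v : ℕ) [NeZero v] (ι : Type) [Fintype ι] [DecidableEq ι]
    [AddAction (ZMod v) ι] (ℬ : ι → Finset (ZMod v)) (s : ℕ) (P : Finset ι)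
    (b : ι) : Prop :=
  (∀ O ∈ Orbs v ι, ((P ∩ O).filter (fun c => ((ℬ b) ∩ (ℬ c)).Nonempty)).card ≤ 1) ∧
    ∀ O ∈ Orbs v ι, (P ∩ O).card ≤ s - 1 → ∀ c ∈ P ∩ O, Disjoint (ℬ b) (ℬ c)

instance (v : ℕ) [NeZero v] (ι : Type) [Fintype ι] [DecidableEq ι]
    [AddAction (ZMod v) ι] (ℬ : ι → Finset (ZMod v)) (s : ℕ) (P : Finset ι) :
    DecidablePred (isGood v ι ℬ s P) := fun b => by
  unfold isGood; infer_instance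


section AuxStmt13
variable {v : ℕ} [NeZero v] {ι : Type} [Fintype ι] [DecidableEq ι] [AddAction (ZMod v) ι]

omit [Fintype ι] in
lemma mem_orbF_self' (b : ι) : b ∈ orbF v b := by
  simp only [orbF, Finset.mem_image]
  exact ⟨0, Finset.mem_univ _, zero_vadd _ _⟩

omit [Fintype ι] in
lemma orbF_eq_of_mem' {b c : ι} (h : c ∈ orbF v b) : orbF v c = orbF v b := by
  simp only [orbF, Finset.mem_image] at h
  obtain ⟨t, -, rfl⟩ := h
  ext x
  simp only [orbF, Finset.mem_image]
  constructor
  · rintro ⟨u, -, rfl⟩; exact ⟨u + t, Finset.mem_univ _, (vadd_vadd u t b).symm⟩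
  · rintro ⟨w, -, rfl⟩
    exact ⟨w - t, Finset.mem_univ _, by rw [vadd_vadd, sub_add_cancel]⟩

lemma orbF_mem_Orbs' (b : ι) : orbF v b ∈ Orbs v ι := by
  simp only [Orbs, Finset.mem_image]; exact ⟨b, Finset.mem_univ _, rfl⟩

lemma eq_orbF_of_mem' {O : Finset ι} (hO : O ∈ Orbs v ι) {b : ι} (hb : b ∈ O) :
    O = orbF v b := by
  simp only [Orbs, Finset.mem_image] at hO
  obtain ⟨c, -, rfl⟩ := hO
  exact (orbF_eq_of_mem' hb).symm

lemma meet_bound' {k : ℕ} (ℬ : ι → Finset (ZMod v)) (hcard : ∀ b, (ℬ b).card = k)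
    (hequiv : ∀ (t : ZMod v) (b : ι), ℬ (t +ᵥ b) = (ℬ b).image (· + t))
    (S : Finset (ZMod v)) {O : Finset ι} (hO : O ∈ Orbs v ι) :
    (O.filter (fun c => (S ∩ ℬ c).Nonempty)).card ≤ S.card * k := by
  simp only [Orbs, Finset.mem_image] at hO
  obtain ⟨b0, -, rfl⟩ := hO
  have hsub : (orbF v b0).filter (fun c => (S ∩ ℬ c).Nonempty) ⊆
      (S ×ˢ ℬ b0).image (fun pq : ZMod v × ZMod v => (pq.1 - pq.2) +ᵥ b0) := by
    intro c hc
    rw [Finset.mem_filter] at hc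
    obtain ⟨hcO, p, hp⟩ := hc
    simp only [orbF, Finset.mem_image] at hcO
    obtain ⟨t, -, rfl⟩ := hcO
    rw [Finset.mem_inter, hequiv] at hp
    obtain ⟨hpS, hpB⟩ := hp
    simp only [Finset.mem_image] at hpB
    obtain ⟨q, hq, rfl⟩ := hpB
    refine Finset.mem_image.2 ⟨(q + t, q), Finset.mem_product.2 ⟨hpS, hq⟩, ?_⟩
    simp [add_sub_cancel_right]
  calc ((orbF v b0).filter (fun c => (S ∩ ℬ c).Nonempty)).card
      ≤ _ := Finset.card_le_card hsub
    _ ≤ (S ×ˢ ℬ b0).card := Finset.card_image_le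
    _ = S.card * k := by rw [Finset.card_product, hcard]

lemma dPar_eq' (s : ℕ) (P : Finset ι) :
    dPar v ι s P = ∑ O ∈ Orbs v ι, (s - 1 - (P ∩ O).card) := by
  rw [dPar]
  have h1 : ∀ O ∈ Orbs v ι, (s - 1 - (P ∩ O).card) =
      ∑ a ∈ Finset.range (s-1), if (P ∩ O).card = a then (s - 1 - a) else 0 := by
    intro O _
    rw [Finset.sum_ite_eq (Finset.range (s-1)) ((P ∩ O).card) (fun a => s - 1 - a)]
    by_cases h : (P ∩ O).card ∈ Finset.range (s-1)
    · rw [if_pos h]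
    · rw [if_neg h]; rw [Finset.mem_range] at h; omega
  rw [Finset.sum_congr rfl h1, Finset.sum_comm]
  apply Finset.sum_congr rfl
  intro a _
  rw [tauP, ← Finset.sum_filter, Finset.sum_const, smul_eq_mul, mul_comm]

end AuxStmt13

/-- (Lemma 3.2) Let `k ≥ 2λ+1`, `s = ⌊(k-1)/λ⌋`, and let `P'` be a partial parallel
class of a cyclic `(v,k,λ)`-design containing at most `s` blocks from each orbit. If
every orbit meeting `P'` in at most `s-2` blocks contains more than
`k²(ks-k+1)(d(P')-1)` `P'`-good blocks, then there is a partial parallel class `P''`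
with `τ_{s-1}(P'') ≤ (k+1)d(P') + τ_{s-1}(P')` such that every orbit meets `P''` in
exactly `s-1` or exactly `s` blocks. -/
theorem stmt_13 (v k lam : ℕ) [NeZero v] (hlam : 1 ≤ lam) (hk : 2 * lam + 1 ≤ k)
    (ι : Type) [Fintype ι] [DecidableEq ι] [AddAction (ZMod v) ι]
    (ℬ : ι → Finset (ZMod v))
    (hcard : ∀ b, (ℬ b).card = k)
    (hpair : ∀ x y : ZMod v, x ≠ y →
      (Finset.univ.filter (fun b => x ∈ ℬ b ∧ y ∈ ℬ b)).card = lam)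
    (hequiv : ∀ (t : ZMod v) (b : ι), ℬ (t +ᵥ b) = (ℬ b).image (· + t))
    (s : ℕ) (hs : s = (k - 1) / lam)
    (P' : Finset ι) (hP' : isPPC ℬ P')
    (hmax : ∀ O ∈ Orbs v ι, (P' ∩ O).card ≤ s)
    (hgood : ∀ O ∈ Orbs v ι, (P' ∩ O).card ≤ s - 2 →
      k ^ 2 * (k * s - k + 1) * (dPar v ι s P' - 1)
        < (O.filter (isGood v ι ℬ s P')).card) :
    ∃ P'' : Finset ι, isPPC ℬ P'' ∧
      tauP v ι P'' (s - 1) ≤ (k + 1) * dPar v ι s P' + tauP v ι P' (s - 1) ∧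
      ∀ O ∈ Orbs v ι, (P'' ∩ O).card = s - 1 ∨ (P'' ∩ O).card = s := by
  classical
  have hk3 : 3 ≤ k := by omega
  have hs2 : 2 ≤ s := by
    rw [hs]
    exact (Nat.le_div_iff_mul_le (by omega)).2 (by omega)
  clear hpair hs
  -- strong induction on dPar
  suffices H : ∀ d (P' : Finset ι), dPar v ι s P' = d → isPPC ℬ P' →
      (∀ O ∈ Orbs v ι, (P' ∩ O).card ≤ s) →
      (∀ O ∈ Orbs v ι, (P' ∩ O).card ≤ s - 2 →
        k ^ 2 * (k * s - k + 1) * (dPar v ι s P' - 1)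
          < (O.filter (isGood v ι ℬ s P')).card) →
      ∃ P'' : Finset ι, isPPC ℬ P'' ∧
        tauP v ι P'' (s - 1) ≤ (k + 1) * dPar v ι s P' + tauP v ι P' (s - 1) ∧
        ∀ O ∈ Orbs v ι, (P'' ∩ O).card = s - 1 ∨ (P'' ∩ O).card = s by
    exact H _ P' rfl hP' hmax hgood
  intro d
  induction d using Nat.strong_induction_on with
  | _ d IH =>
  intro P' hd hP' hmax hgood
  by_cases hz : dPar v ι s P' = 0
  · refine ⟨P', hP', Nat.le_add_left _ _, ?_⟩
    intro O hO
    have h1 := hmax O hO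
    have h2 : s - 1 - (P' ∩ O).card = 0 := by
      have h3 : ∑ O ∈ Orbs v ι, (s - 1 - (P' ∩ O).card) = 0 := by
        rw [← dPar_eq']; exact hz
      exact Finset.sum_eq_zero_iff.1 h3 O hO
    omega
  -- main step: find an orbit meeting P' in at most s-2 blocks
  have hex : ∃ O ∈ Orbs v ι, (P' ∩ O).card ≤ s - 2 := by
    by_contra hcon
    push_neg at hcon
    apply hz
    rw [dPar_eq']
    apply Finset.sum_eq_zero
    intro O hO
    have := hcon O hO
    omega
  obtain ⟨O₀, hO₀, ha⟩ := hex
  have hgd := hgood O₀ hO₀ ha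
  have hne0 : (O₀.filter (isGood v ι ℬ s P')).Nonempty := by
    rw [← Finset.card_pos]; omega
  obtain ⟨b, hbmem⟩ := hne0
  rw [Finset.mem_filter] at hbmem
  obtain ⟨hbO, hbgood⟩ := hbmem
  have hO₀b : O₀ = orbF v b := eq_orbF_of_mem' hO₀ hbO
  have hbk : (ℬ b).Nonempty := by rw [← Finset.card_pos, hcard]; omega
  have hbP' : b ∉ P' := by
    intro hb
    have hmem : b ∈ P' ∩ O₀ := Finset.mem_inter.2 ⟨hb, hbO⟩
    have hdisj := hbgood.2 O₀ hO₀ (by omega) b hmem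
    rw [disjoint_self] at hdisj
    exact hbk.ne_empty hdisj
  set X := P'.filter (fun c => (ℬ b ∩ ℬ c).Nonempty) with hX_def
  set P : Finset ι := insert b (P' \ X) with hP_def
  have hXsub : X ⊆ P' := Finset.filter_subset _ _
  -- X ∩ O as a filter
  have hXO : ∀ O : Finset ι, X ∩ O = (P' ∩ O).filter (fun c => (ℬ b ∩ ℬ c).Nonempty) := by
    intro O
    ext c
    simp only [hX_def, Finset.mem_inter, Finset.mem_filter]
    tauto
  have hXO1 : ∀ O ∈ Orbs v ι, (X ∩ O).card ≤ 1 := by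
    intro O hO
    rw [hXO O]
    exact hbgood.1 O hO
  have hXO0 : ∀ O ∈ Orbs v ι, (P' ∩ O).card ≤ s - 1 → X ∩ O = ∅ := by
    intro O hO hle
    rw [hXO O]
    rw [Finset.filter_eq_empty_iff]
    intro c hc hne
    exact hne.ne_empty (Finset.disjoint_iff_inter_eq_empty.1 (hbgood.2 O hO hle c hc))
  -- count in O₀
  have hPO₀ : P ∩ O₀ = insert b (P' ∩ O₀) := by
    rw [hP_def, Finset.insert_inter_of_mem hbO]
    congr 1
    have hX0 : X ∩ O₀ = ∅ := hXO0 O₀ hO₀ (by omega)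
    ext c
    simp only [Finset.mem_inter, Finset.mem_sdiff]
    constructor
    · tauto
    · rintro ⟨hc, hcO⟩
      refine ⟨⟨hc, fun hcX => ?_⟩, hcO⟩
      have : c ∈ X ∩ O₀ := Finset.mem_inter.2 ⟨hcX, hcO⟩
      rw [hX0] at this
      exact absurd this (Finset.notMem_empty c)
  have hcardO₀ : (P ∩ O₀).card = (P' ∩ O₀).card + 1 := by
    rw [hPO₀, Finset.card_insert_of_notMem (fun h => hbP' (Finset.mem_inter.1 h).1)]
  -- counts in other orbits
  have hcnt : ∀ O ∈ Orbs v ι, O ≠ O₀ → P ∩ O = (P' ∩ O) \ X := by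
    intro O hO hne
    have hbO' : b ∉ O := fun h => hne ((eq_orbF_of_mem' hO h).trans hO₀b.symm)
    rw [hP_def, Finset.insert_inter_of_notMem hbO']
    ext c
    simp only [Finset.mem_inter, Finset.mem_sdiff]
    tauto
  have hcnt2 : ∀ O ∈ Orbs v ι, O ≠ O₀ →
      (P ∩ O).card = (P' ∩ O).card ∨
        ((P' ∩ O).card = s ∧ (P ∩ O).card = s - 1 ∧ ∃ x ∈ X, x ∈ O) := by
    intro O hO hne
    rw [hcnt O hO hne]
    by_cases hx : (X ∩ O) = ∅
    · left
      congr 1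
      rw [Finset.sdiff_eq_self_iff_disjoint, Finset.disjoint_right]
      intro c hcX hcPO
      have : c ∈ X ∩ O := Finset.mem_inter.2 ⟨hcX, (Finset.mem_inter.1 hcPO).2⟩
      rw [hx] at this
      exact absurd this (Finset.notMem_empty c)
    · right
      have hone : (X ∩ O).card = 1 := by
        have h1 := hXO1 O hO
        have h2 : 0 < (X ∩ O).card :=
          Finset.card_pos.2 (Finset.nonempty_iff_ne_empty.2 hx)
        omega
      have hsc : (P' ∩ O).card = s := by
        by_contra h
        have : (P' ∩ O).card ≤ s - 1 := by have := hmax O hO; omega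
        exact hx (hXO0 O hO this)
      have hXOsub : X ∩ O ⊆ P' ∩ O := by
        intro c hc
        rw [Finset.mem_inter] at hc ⊢
        exact ⟨hXsub hc.1, hc.2⟩
      have hsd : (P' ∩ O) \ X = (P' ∩ O) \ (X ∩ O) := by
        ext c
        simp only [Finset.mem_sdiff, Finset.mem_inter]
        tauto
      refine ⟨hsc, ?_, ?_⟩
      · rw [hsd, Finset.card_sdiff_of_subset hXOsub, hone, hsc]
      · obtain ⟨x, hx⟩ := Finset.nonempty_iff_ne_empty.2 hx
        rw [Finset.mem_inter] at hx
        exact ⟨x, hx.1, hx.2⟩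
  -- dPar of P
  have hdP : dPar v ι s P + 1 = dPar v ι s P' := by
    rw [dPar_eq', dPar_eq', ← Finset.sum_erase_add _ _ hO₀, ← Finset.sum_erase_add _ _ hO₀]
    have hterm : ∀ O ∈ (Orbs v ι).erase O₀,
        (fun O => s - 1 - (P ∩ O).card) O = (fun O => s - 1 - (P' ∩ O).card) O := by
      intro O hO
      obtain ⟨hne, hO⟩ := Finset.mem_erase.1 hO
      rcases hcnt2 O hO hne with h | ⟨h1, h2, -⟩
      · simp only [h]
      · simp only [h1, h2]; omega
    rw [Finset.sum_congr rfl hterm, hcardO₀]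
    omega
  -- P is a PPC
  have hPPC : isPPC ℬ P := by
    intro c hc c' hc' hnecc
    rw [hP_def, Finset.mem_insert, Finset.mem_sdiff] at hc hc'
    have hdisj : ∀ c'', c'' ∈ P' → c'' ∉ X → Disjoint (ℬ b) (ℬ c'') := by
      intro c'' h1 h2
      rw [Finset.disjoint_iff_inter_eq_empty, ← Finset.not_nonempty_iff_eq_empty]
      exact fun h => h2 (Finset.mem_filter.2 ⟨h1, h⟩)
    rcases hc with rfl | ⟨hc, hcX⟩
    · rcases hc' with rfl | ⟨hc', hc'X⟩
      · exact absurd rfl hnecc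
      · exact hdisj c' hc' hc'X
    · rcases hc' with rfl | ⟨hc', hc'X⟩
      · exact (hdisj c hc hcX).symm
      · exact hP' c hc c' hc' hnecc
  -- hmax for P
  have hmaxP : ∀ O ∈ Orbs v ι, (P ∩ O).card ≤ s := by
    intro O hO
    by_cases hne : O = O₀
    · subst hne; omega
    · rcases hcnt2 O hO hne with h | ⟨-, h2, -⟩
      · rw [h]; exact hmax O hO
      · omega
  -- |X| ≤ k
  have hXk : X.card ≤ k := by
    have hle : X.card ≤ (ℬ b).card := by
      apply Finset.card_le_card_of_injOn
        (fun c => if h : (ℬ b ∩ ℬ c).Nonempty then h.choose else (0 : ZMod v))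
      · intro c hc
        rw [Finset.mem_coe, hX_def, Finset.mem_filter] at hc
        simp only [Finset.mem_coe]
        rw [dif_pos hc.2]
        exact (Finset.mem_inter.1 hc.2.choose_spec).1
      · intro c hc c' hc' heq
        by_contra hnecc
        rw [Finset.mem_coe, hX_def, Finset.mem_filter] at hc hc'
        simp only at heq
        rw [dif_pos hc.2, dif_pos hc'.2] at heq
        have h1 := (Finset.mem_inter.1 hc.2.choose_spec).2
        have h2 := (Finset.mem_inter.1 hc'.2.choose_spec).2
        have hdj := hP' c hc.1 c' hc'.1 hnecc
        exact (Finset.disjoint_left.1 hdj h1) (heq ▸ h2)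
    rw [hcard] at hle
    exact hle
  -- the set of second-hand blocks Y
  set Y := (P' \ X).filter (fun c' => ∃ x ∈ X, x ∈ orbF v c') with hY_def
  have hYcard : Y.card ≤ X.card * (s - 1) := by
    have hsub : Y ⊆ X.biUnion (fun x => (P' ∩ orbF v x).erase x) := by
      intro c' hc'
      rw [hY_def, Finset.mem_filter, Finset.mem_sdiff] at hc'
      obtain ⟨⟨hc'P, hc'X⟩, x, hxX, hxorb⟩ := hc'
      refine Finset.mem_biUnion.2 ⟨x, hxX, Finset.mem_erase.2 ⟨?_, ?_⟩⟩
      · rintro rfl; exact hc'X hxX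
      · refine Finset.mem_inter.2 ⟨hc'P, ?_⟩
        rw [orbF_eq_of_mem' hxorb]
        exact mem_orbF_self' c'
    calc Y.card ≤ _ := Finset.card_le_card hsub
      _ ≤ ∑ x ∈ X, ((P' ∩ orbF v x).erase x).card := Finset.card_biUnion_le
      _ ≤ ∑ _x ∈ X, (s - 1) := by
          apply Finset.sum_le_sum
          intro x hx
          have hxP : x ∈ P' ∩ orbF v x :=
            Finset.mem_inter.2 ⟨hXsub hx, mem_orbF_self' x⟩
          rw [Finset.card_erase_of_mem hxP]
          have := hmax (orbF v x) (orbF_mem_Orbs' x)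
          omega
      _ = X.card * (s - 1) := by rw [Finset.sum_const, smul_eq_mul]
  -- hgood for P
  have hgoodP : ∀ O ∈ Orbs v ι, (P ∩ O).card ≤ s - 2 →
      k ^ 2 * (k * s - k + 1) * (dPar v ι s P - 1)
        < (O.filter (isGood v ι ℬ s P)).card := by
    intro O hO hle
    have hle' : (P' ∩ O).card ≤ s - 2 := by
      by_cases hne : O = O₀
      · subst hne; omega
      · rcases hcnt2 O hO hne with h | ⟨-, h2, -⟩ <;> omega
    have hgd' := hgood O hO hle'
    have hd1 : 1 ≤ dPar v ι s P := by
      rw [dPar_eq']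
      calc 1 ≤ s - 1 - (P ∩ O).card := by omega
        _ ≤ _ := Finset.single_le_sum (f := fun O => s - 1 - (P ∩ O).card)
            (fun _ _ => Nat.zero_le _) hO
    -- key subset claim: a P'-good block that is P-bad meets b or meets a block in Y
    have hbadsub : O.filter (isGood v ι ℬ s P') ⊆
        (O.filter (isGood v ι ℬ s P)) ∪ (O.filter (fun c => ((ℬ b) ∩ ℬ c).Nonempty))
          ∪ Y.biUnion (fun c' => O.filter (fun c => ((ℬ c') ∩ ℬ c).Nonempty)) := by
      intro c hc
      rw [Finset.mem_filter] at hc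
      obtain ⟨hcO, hcg⟩ := hc
      by_cases hgp : isGood v ι ℬ s P c
      · exact Finset.mem_union_left _
          (Finset.mem_union_left _ (Finset.mem_filter.2 ⟨hcO, hgp⟩))
      by_cases hmeetb : ((ℬ b) ∩ ℬ c).Nonempty
      · exact Finset.mem_union_left _
          (Finset.mem_union_right _ (Finset.mem_filter.2 ⟨hcO, hmeetb⟩))
      -- c does not meet b, and is P-bad: find c' ∈ Y meeting c
      apply Finset.mem_union_right
      rw [isGood, not_and_or] at hgp
      have hnb : ∀ O'' (Q : Finset ι),
          (Q ∩ O'').filter (fun c'' => ((ℬ c) ∩ ℬ c'').Nonempty) ⊆ Q ∩ O'' := by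
        intro O'' Q; exact Finset.filter_subset _ _
      rcases hgp with h1 | h2
      · push_neg at h1
        obtain ⟨O'', hO'', hgt⟩ := h1
        exfalso
        have hsub2 : (P ∩ O'').filter (fun c'' => ((ℬ c) ∩ ℬ c'').Nonempty) ⊆
            (P' ∩ O'').filter (fun c'' => ((ℬ c) ∩ ℬ c'').Nonempty) := by
          intro c'' hc''
          rw [Finset.mem_filter, Finset.mem_inter, hP_def, Finset.mem_insert,
            Finset.mem_sdiff] at hc''
          obtain ⟨⟨hcc, hccO⟩, hmeet⟩ := hc''
          rcases hcc with rfl | ⟨hcc, -⟩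
          · exact absurd (by rwa [Finset.inter_comm] at hmeet) hmeetb
          · exact Finset.mem_filter.2 ⟨Finset.mem_inter.2 ⟨hcc, hccO⟩, hmeet⟩
        have := Finset.card_le_card hsub2
        have := hcg.1 O'' hO''
        omega
      · push_neg at h2
        obtain ⟨O'', hO'', hleO, c'', hc'', hnd⟩ := h2
        rw [Finset.not_disjoint_iff_nonempty_inter] at hnd
        rw [Finset.mem_inter, hP_def, Finset.mem_insert, Finset.mem_sdiff] at hc''
        obtain ⟨hcc, hccO⟩ := hc''
        rcases hcc with rfl | ⟨hccP, hccX⟩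
        · exact absurd (by rwa [Finset.inter_comm] at hnd) hmeetb
        -- c'' ∈ P' \ X, c'' ∈ O''
        by_cases hneO : O'' = O₀
        · exfalso
          rw [hneO] at hccO
          have := hcg.2 O₀ hO₀ (by omega) c'' (Finset.mem_inter.2 ⟨hccP, hccO⟩)
          rw [Finset.disjoint_iff_inter_eq_empty] at this
          exact hnd.ne_empty this
        by_cases hsml : (P' ∩ O'').card ≤ s - 1
        · exfalso
          have := hcg.2 O'' hO'' hsml c'' (Finset.mem_inter.2 ⟨hccP, hccO⟩)
          rw [Finset.disjoint_iff_inter_eq_empty] at this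
          exact hnd.ne_empty this
        -- so (P' ∩ O'').card = s > (P ∩ O'').card : some x ∈ X lies in O''
        obtain ⟨x, hxX, hxO⟩ : ∃ x ∈ X, x ∈ O'' := by
          rcases hcnt2 O'' hO'' hneO with h | ⟨-, -, h⟩
          · exfalso; have := hmax O'' hO''; omega
          · exact h
        have hc''Y : c'' ∈ Y := by
          rw [hY_def, Finset.mem_filter, Finset.mem_sdiff]
          refine ⟨⟨hccP, hccX⟩, x, hxX, ?_⟩
          rw [← eq_orbF_of_mem' hO'' hccO]
          exact hxO
        refine Finset.mem_biUnion.2 ⟨c'', hc''Y, Finset.mem_filter.2 ⟨hcO, ?_⟩⟩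
        rwa [Finset.inter_comm] at hnd
    -- count the two exceptional sets
    have hBb : (O.filter (fun c => ((ℬ b) ∩ ℬ c).Nonempty)).card ≤ k * k := by
      have := meet_bound' ℬ hcard hequiv (ℬ b) hO
      rwa [hcard] at this
    have hBY : (Y.biUnion (fun c' => O.filter (fun c => ((ℬ c') ∩ ℬ c).Nonempty))).card
        ≤ (k * (s - 1)) * (k * k) := by
      calc _ ≤ ∑ c' ∈ Y, (O.filter (fun c => ((ℬ c') ∩ ℬ c).Nonempty)).card :=
            Finset.card_biUnion_le
        _ ≤ ∑ _c' ∈ Y, k * k := by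
            apply Finset.sum_le_sum
            intro c' _
            have := meet_bound' ℬ hcard hequiv (ℬ c') hO
            rwa [hcard] at this
        _ = Y.card * (k * k) := by rw [Finset.sum_const, smul_eq_mul]
        _ ≤ (k * (s - 1)) * (k * k) := by
            apply Nat.mul_le_mul_right
            calc Y.card ≤ X.card * (s - 1) := hYcard
              _ ≤ k * (s - 1) := Nat.mul_le_mul_right _ hXk
    have hchain : (O.filter (isGood v ι ℬ s P')).card ≤
        (O.filter (isGood v ι ℬ s P)).card + (k * k + (k * (s - 1)) * (k * k)) := by
      calc (O.filter (isGood v ι ℬ s P')).card ≤ _ := Finset.card_le_card hbadsub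
        _ ≤ ((O.filter (isGood v ι ℬ s P)) ∪
              (O.filter (fun c => ((ℬ b) ∩ ℬ c).Nonempty))).card +
            (Y.biUnion (fun c' => O.filter (fun c => ((ℬ c') ∩ ℬ c).Nonempty))).card :=
          Finset.card_union_le _ _
        _ ≤ ((O.filter (isGood v ι ℬ s P)).card +
              (O.filter (fun c => ((ℬ b) ∩ ℬ c).Nonempty)).card) +
            (Y.biUnion (fun c' => O.filter (fun c => ((ℬ c') ∩ ℬ c).Nonempty))).card :=
          Nat.add_le_add_right (Finset.card_union_le _ _) _
        _ ≤ _ := by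
            rw [add_assoc]
            exact Nat.add_le_add_left (Nat.add_le_add hBb hBY) _
    -- arithmetic
    have hMeq : k ^ 2 * (k * s - k + 1) = k * k + (k * (s - 1)) * (k * k) := by
      have h1 : k * s - k + 1 = k * (s - 1) + 1 := by
        have h2 : k * s = k * (s - 1) + k := by
          rw [← Nat.mul_succ]
          congr 1
          omega
        omega
      rw [h1]
      ring
    have hstep : k ^ 2 * (k * s - k + 1) * (dPar v ι s P' - 1) =
        k ^ 2 * (k * s - k + 1) * (dPar v ι s P - 1) + k ^ 2 * (k * s - k + 1) := by
      have : dPar v ι s P' - 1 = (dPar v ι s P - 1) + 1 := by omega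
      rw [this, Nat.mul_succ]
    rw [hstep, hMeq] at hgd'
    rw [hMeq]
    omega
  -- apply the induction hypothesis to P
  have hdPd : dPar v ι s P = d - 1 := by omega
  obtain ⟨P'', h1, h2, h3⟩ := IH (d - 1) (by omega) P hdPd hPPC hmaxP hgoodP
  refine ⟨P'', h1, ?_, h3⟩
  -- tau bound
  have htau : tauP v ι P (s - 1) ≤ tauP v ι P' (s - 1) + X.card + 1 := by
    rw [tauP, tauP]
    have hsub : (Orbs v ι).filter (fun O => (P ∩ O).card = s - 1) ⊆
        ((Orbs v ι).filter (fun O => (P' ∩ O).card = s - 1)) ∪ X.image (orbF v) ∪ {O₀} := by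
      intro O hOf
      rw [Finset.mem_filter] at hOf
      obtain ⟨hO, hc⟩ := hOf
      by_cases hne : O = O₀
      · subst hne
        exact Finset.mem_union_right _ (Finset.mem_singleton.2 rfl)
      rcases hcnt2 O hO hne with h | ⟨-, -, x, hxX, hxO⟩
      · exact Finset.mem_union_left _ (Finset.mem_union_left _
          (Finset.mem_filter.2 ⟨hO, by omega⟩))
      · refine Finset.mem_union_left _ (Finset.mem_union_right _ ?_)
        rw [Finset.mem_image]
        exact ⟨x, hxX, (eq_orbF_of_mem' hO hxO).symm⟩
    calc ((Orbs v ι).filter (fun O => (P ∩ O).card = s - 1)).card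
        ≤ _ := Finset.card_le_card hsub
      _ ≤ (((Orbs v ι).filter (fun O => (P' ∩ O).card = s - 1)) ∪ X.image (orbF v)).card
          + ({O₀} : Finset (Finset ι)).card := Finset.card_union_le _ _
      _ ≤ (((Orbs v ι).filter (fun O => (P' ∩ O).card = s - 1)).card
          + (X.image (orbF v)).card) + ({O₀} : Finset (Finset ι)).card :=
        Nat.add_le_add_right (Finset.card_union_le _ _) _
      _ ≤ _ := by
          rw [Finset.card_singleton]
          exact Nat.add_le_add_right
            (Nat.add_le_add_left Finset.card_image_le _) _
  calc tauP v ι P'' (s - 1) ≤ (k + 1) * dPar v ι s P + tauP v ι P (s - 1) := h2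
    _ ≤ (k + 1) * dPar v ι s P + (tauP v ι P' (s - 1) + X.card + 1) :=
      Nat.add_le_add_left htau _
    _ ≤ (k + 1) * dPar v ι s P + (tauP v ι P' (s - 1) + k + 1) := by
        apply Nat.add_le_add_left
        omega
    _ = (k + 1) * (dPar v ι s P + 1) + tauP v ι P' (s - 1) := by ring
    _ = (k + 1) * dPar v ι s P' + tauP v ι P' (s - 1) := by rw [hdP]
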